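/- Let n, k ∈ ℤ³ \ {0} with k ≠ n, k₃ ≠ 0, n₃ − k₃ ≠ 0, |k| ≤ N and |n−k| ≤ N, and suppose ω^σ := σ₁·k₃/|k| + σ₂·(n₃−k₃)/|n−k| − σ₃·n₃/|n| is nonzero for all σ ∈ {±1}³. Then |ω^σ| ≥ 3⁻³·2⁻⁴·N⁻¹² for every σ ∈ {±1}³. -/
import Mathlib


/-- Euclidean norm of an integer vector in ℤ³. -/
noncomputable def nrm (v : Fin 3 → ℤ) : ℝ :=
  Real.sqrt (((v 0 : ℝ)) ^ 2 + ((v 1 : ℝ)) ^ 2 + ((v 2 : ℝ)) ^ 2)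

/-- The resonance function ω^σ = σ₁·k₃/|k| + σ₂·(n₃−k₃)/|n−k| − σ₃·n₃/|n|. -/
noncomputable def omg (n k : Fin 3 → ℤ) (σ₁ σ₂ σ₃ : ℝ) : ℝ :=
  σ₁ * (k 2 : ℝ) / nrm k + σ₂ * ((n 2 - k 2 : ℤ) : ℝ) / nrm (n - k)
    - σ₃ * (n 2 : ℝ) / nrm n

lemma nrm_nonneg (v : Fin 3 → ℤ) : 0 ≤ nrm v := Real.sqrt_nonneg _

lemma nrm_sq (v : Fin 3 → ℤ) :
    nrm v ^ 2 = ((v 0 : ℝ)) ^ 2 + ((v 1 : ℝ)) ^ 2 + ((v 2 : ℝ)) ^ 2 := by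
  apply Real.sq_sqrt; positivity

lemma nrm_pos {v : Fin 3 → ℤ} (h : v ≠ 0) : 0 < nrm v := by
  apply Real.sqrt_pos.mpr
  rcases (by positivity : (0:ℝ) ≤ ((v 0 : ℝ)) ^ 2 + ((v 1 : ℝ)) ^ 2 + ((v 2 : ℝ)) ^ 2).lt_or_eq
    with h' | h'
  · exact h'
  · exfalso
    have h0 : ∀ i : Fin 3, v i = 0 := by
      have e0 : ((v 0 : ℝ)) ^ 2 = 0 := by nlinarith [sq_nonneg ((v 1:ℝ)), sq_nonneg ((v 2:ℝ)), sq_nonneg ((v 0:ℝ))]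
      have e1 : ((v 1 : ℝ)) ^ 2 = 0 := by nlinarith [sq_nonneg ((v 1:ℝ)), sq_nonneg ((v 2:ℝ)), sq_nonneg ((v 0:ℝ))]
      have e2 : ((v 2 : ℝ)) ^ 2 = 0 := by nlinarith [sq_nonneg ((v 1:ℝ)), sq_nonneg ((v 2:ℝ)), sq_nonneg ((v 0:ℝ))]
      have f0 : v 0 = 0 := by exact_mod_cast pow_eq_zero_iff (n := 2) (by norm_num) |>.mp e0
      have f1 : v 1 = 0 := by exact_mod_cast pow_eq_zero_iff (n := 2) (by norm_num) |>.mp e1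
      have f2 : v 2 = 0 := by exact_mod_cast pow_eq_zero_iff (n := 2) (by norm_num) |>.mp e2
      intro i
      fin_cases i
      · exact f0
      · exact f1
      · exact f2
    exact h (funext h0)

lemma nrm_triangle (x y : Fin 3 → ℤ) : nrm (x + y) ≤ nrm x + nrm y := by
  have he : ∀ v : Fin 3 → ℤ, nrm v = ‖(WithLp.equiv 2 (Fin 3 → ℝ)).symm (fun i => (v i : ℝ))‖ := by
    intro v
    rw [EuclideanSpace.norm_eq]
    simp [nrm, Fin.sum_univ_three, Real.norm_eq_abs, sq_abs]
  rw [he, he, he]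
  have : (WithLp.equiv 2 (Fin 3 → ℝ)).symm (fun i => ((x + y) i : ℝ))
      = (WithLp.equiv 2 (Fin 3 → ℝ)).symm (fun i => (x i : ℝ))
        + (WithLp.equiv 2 (Fin 3 → ℝ)).symm (fun i => (y i : ℝ)) := by
    ext i
    simp [Pi.add_apply]
  rw [this]
  exact norm_add_le _ _


lemma quad_factor_bound {N w x y z : ℝ} (hN : 1 ≤ N) (hw : 0 ≤ w) (hx0 : 0 ≤ x)
    (hy0 : 0 ≤ y) (hz0 : 0 ≤ z) (hx3 : x ≤ 3) (hy3 : y ≤ 3) (hz3 : z ≤ 3)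
    (hp : 1 / (16 * N ^ 12) ≤ w * x * y * z) :
    ((3 : ℝ) ^ 3)⁻¹ * ((2 : ℝ) ^ 4)⁻¹ * (N ^ 12)⁻¹ ≤ w := by
  have h27 : w * x * y * z ≤ 27 * w := by
    calc w * x * y * z ≤ w * 3 * 3 * 3 := by gcongr
      _ = 27 * w := by ring
  have hlhs : 1 / (16 * N ^ 12) ≤ 27 * w := le_trans hp h27
  have h16 : (0:ℝ) < N ^ 12 := by positivity
  have e1 : 1 / (16 * N ^ 12) = (1 / 16) * (N ^ 12)⁻¹ := by field_simp
  rw [e1] at hlhs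
  have hNinv : (0:ℝ) < (N ^ 12)⁻¹ := by positivity
  have e2 : ((3 : ℝ) ^ 3)⁻¹ * ((2 : ℝ) ^ 4)⁻¹ * (N ^ 12)⁻¹ = (1 / 432) * (N ^ 12)⁻¹ := by
    norm_num
  rw [e2]
  linarith


set_option maxHeartbeats 1600000 in
/-- Quantitative lower bound on nonzero resonance frequencies: if ω^σ ≠ 0 for all signs
σ ∈ {±1}³, then |ω^σ| ≥ 3⁻³·2⁻⁴·N⁻¹² for every σ. -/
theorem nonresonant_lower_bound (N : ℝ) (hN : 1 ≤ N) (n k : Fin 3 → ℤ)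
    (hn : n ≠ 0) (hk : k ≠ 0) (hkn : k ≠ n)
    (hk3 : k 2 ≠ 0) (hnk3 : n 2 - k 2 ≠ 0)
    (hkN : nrm k ≤ N) (hnkN : nrm (n - k) ≤ N)
    (hnz : ∀ σ₁ σ₂ σ₃ : ℝ, (σ₁ = 1 ∨ σ₁ = -1) → (σ₂ = 1 ∨ σ₂ = -1) → (σ₃ = 1 ∨ σ₃ = -1) →
      omg n k σ₁ σ₂ σ₃ ≠ 0) :
    ∀ σ₁ σ₂ σ₃ : ℝ, (σ₁ = 1 ∨ σ₁ = -1) → (σ₂ = 1 ∨ σ₂ = -1) → (σ₃ = 1 ∨ σ₃ = -1) →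
      ((3 : ℝ) ^ 3)⁻¹ * ((2 : ℝ) ^ 4)⁻¹ * (N ^ 12)⁻¹ ≤ |omg n k σ₁ σ₂ σ₃| := by
  have hnk : n - k ≠ 0 := by
    intro h
    exact hkn (sub_eq_zero.mp h).symm
  have hKpos : 0 < nrm k := nrm_pos hk
  have hLpos : 0 < nrm (n - k) := nrm_pos hnk
  have hMpos : 0 < nrm n := nrm_pos hn
  set Kr := nrm k with hKr
  set Lr := nrm (n - k) with hLr
  set Mr := nrm n with hMr
  have hK2 : Kr ^ 2 = ((k 0 : ℝ)) ^ 2 + ((k 1 : ℝ)) ^ 2 + ((k 2 : ℝ)) ^ 2 := nrm_sq k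
  have hL2 : Lr ^ 2 = ((n 0 : ℝ) - (k 0 : ℝ)) ^ 2 + ((n 1 : ℝ) - (k 1 : ℝ)) ^ 2
      + ((n 2 : ℝ) - (k 2 : ℝ)) ^ 2 := by
    have := nrm_sq (n - k)
    simpa [Pi.sub_apply] using this
  have hM2 : Mr ^ 2 = ((n 0 : ℝ)) ^ 2 + ((n 1 : ℝ)) ^ 2 + ((n 2 : ℝ)) ^ 2 := nrm_sq n
  set a : ℝ := (k 2 : ℝ) / Kr with ha
  set b : ℝ := ((n 2 : ℝ) - (k 2 : ℝ)) / Lr with hb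
  set c : ℝ := (n 2 : ℝ) / Mr with hc
  have homg : ∀ s₁ s₂ s₃ : ℝ, omg n k s₁ s₂ s₃ = s₁ * a + s₂ * b - s₃ * c := by
    intro s₁ s₂ s₃
    simp only [omg, ← hKr, ← hLr, ← hMr, ha, hb, hc]
    push_cast
    ring
  -- |a|, |b|, |c| bounds
  have habs : ∀ x D : ℝ, 0 < D → x ^ 2 ≤ D ^ 2 → |x / D| ≤ 1 := by
    intro x D hD hx
    rw [abs_div, abs_of_pos hD, div_le_one hD, ← Real.sqrt_sq_eq_abs,
      ← Real.sqrt_sq hD.le]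
    exact Real.sqrt_le_sqrt hx
  have ha1 : |a| ≤ 1 := by
    apply habs _ _ hKpos
    rw [hK2]; nlinarith [sq_nonneg ((k 0 : ℝ)), sq_nonneg ((k 1 : ℝ))]
  have hb1 : |b| ≤ 1 := by
    apply habs _ _ hLpos
    rw [hL2]; nlinarith [sq_nonneg ((n 0 : ℝ) - (k 0 : ℝ)), sq_nonneg ((n 1 : ℝ) - (k 1 : ℝ))]
  have hc1 : |c| ≤ 1 := by
    apply habs _ _ hMpos
    rw [hM2]; nlinarith [sq_nonneg ((n 0 : ℝ)), sq_nonneg ((n 1 : ℝ))]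
  have homgle : ∀ s₁ s₂ s₃ : ℝ, |s₁| = 1 → |s₂| = 1 → |s₃| = 1 →
      |omg n k s₁ s₂ s₃| ≤ 3 := by
    intro s₁ s₂ s₃ hs₁ hs₂ hs₃
    rw [homg]
    calc |s₁ * a + s₂ * b - s₃ * c| ≤ |s₁ * a + s₂ * b| + |s₃ * c| := abs_sub _ _
      _ ≤ |s₁ * a| + |s₂ * b| + |s₃ * c| := by linarith [abs_add_le (s₁ * a) (s₂ * b)]
      _ = |a| + |b| + |c| := by rw [abs_mul, abs_mul, abs_mul, hs₁, hs₂, hs₃]; ring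
      _ ≤ 3 := by linarith
  -- integer quantities
  set KK : ℤ := (k 0) ^ 2 + (k 1) ^ 2 + (k 2) ^ 2 with hKK
  set LL : ℤ := (n 0 - k 0) ^ 2 + (n 1 - k 1) ^ 2 + (n 2 - k 2) ^ 2 with hLL
  set MM : ℤ := (n 0) ^ 2 + (n 1) ^ 2 + (n 2) ^ 2 with hMM
  have hKKr : (KK : ℝ) = Kr ^ 2 := by rw [hKK, hK2]; push_cast; ring
  have hLLr : (LL : ℝ) = Lr ^ 2 := by rw [hLL, hL2]; push_cast; ring
  have hMMr : (MM : ℝ) = Mr ^ 2 := by rw [hMM, hM2]; push_cast; ring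
  set A : ℤ := (k 2) ^ 2 * LL * MM + (n 2 - k 2) ^ 2 * KK * MM - (n 2) ^ 2 * KK * LL with hA
  set Mi : ℤ := A ^ 2 - 4 * (k 2) ^ 2 * (n 2 - k 2) ^ 2 * KK * LL * MM ^ 2 with hMi
  have key : ((a + b) ^ 2 - c ^ 2) * ((a - b) ^ 2 - c ^ 2) * ((KK : ℝ) * LL * MM) ^ 2
      = (Mi : ℝ) := by
    rw [hMi, hA]
    push_cast
    rw [hKKr, hLLr, hMMr, ha, hb, hc]
    field_simp
    ring
  -- product of the four resonances
  have hP : omg n k 1 1 1 * omg n k (-1) (-1) 1 * omg n k 1 (-1) 1 * omg n k (-1) 1 1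
      = ((a + b) ^ 2 - c ^ 2) * ((a - b) ^ 2 - c ^ 2) := by
    rw [homg, homg, homg, homg]; ring
  have hKKpos : (0:ℝ) < (KK : ℝ) := by rw [hKKr]; positivity
  have hLLpos : (0:ℝ) < (LL : ℝ) := by rw [hLLr]; positivity
  have hMMpos : (0:ℝ) < (MM : ℝ) := by rw [hMMr]; positivity
  have hMine : Mi ≠ 0 := by
    intro h0
    have hz : ((a + b) ^ 2 - c ^ 2) * ((a - b) ^ 2 - c ^ 2) = 0 := by
      have hden : ((KK : ℝ) * LL * MM) ^ 2 ≠ 0 := by positivity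
      have := key
      rw [h0] at this
      push_cast at this
      exact (mul_eq_zero.mp this).resolve_right hden
    rw [← hP] at hz
    have h1 := hnz 1 1 1 (Or.inl rfl) (Or.inl rfl) (Or.inl rfl)
    have h2 := hnz (-1) (-1) 1 (Or.inr rfl) (Or.inr rfl) (Or.inl rfl)
    have h3 := hnz 1 (-1) 1 (Or.inl rfl) (Or.inr rfl) (Or.inl rfl)
    have h4 := hnz (-1) 1 1 (Or.inr rfl) (Or.inl rfl) (Or.inl rfl)
    rcases mul_eq_zero.mp hz with h | h
    · rcases mul_eq_zero.mp h with h | h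
      · rcases mul_eq_zero.mp h with h | h
        · exact h1 h
        · exact h2 h
      · exact h3 h
    · exact h4 h
  have hMi1 : (1:ℝ) ≤ |(Mi : ℝ)| := by
    rw [← Int.cast_abs]
    exact_mod_cast Int.one_le_abs hMine
  -- denominator bound
  have hMrN : Mr ≤ 2 * N := by
    have : n = (n - k) + k := by ring
    calc Mr = nrm ((n - k) + k) := by rw [hMr, ← this]
      _ ≤ nrm (n - k) + nrm k := nrm_triangle _ _
      _ ≤ 2 * N := by rw [← hKr, ← hLr]; linarith
  have hKKle : (KK : ℝ) ≤ N ^ 2 := by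
    rw [hKKr]; nlinarith
  have hLLle : (LL : ℝ) ≤ N ^ 2 := by
    rw [hLLr]; nlinarith
  have hMMle : (MM : ℝ) ≤ 4 * N ^ 2 := by
    rw [hMMr]; nlinarith
  have hNpos : (0:ℝ) < N := lt_of_lt_of_le one_pos hN
  have hDen : ((KK : ℝ) * LL * MM) ^ 2 ≤ 16 * N ^ 12 := by
    have h1 : (KK : ℝ) * LL * MM ≤ N ^ 2 * N ^ 2 * (4 * N ^ 2) := by
      have := mul_le_mul hKKle hLLle hLLpos.le (by positivity : (0:ℝ) ≤ N ^ 2)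
      exact mul_le_mul this hMMle hMMpos.le (by positivity)
    have h2 : (0:ℝ) ≤ (KK : ℝ) * LL * MM := by positivity
    nlinarith
  -- lower bound on the product
  have hprodlb : 1 / (16 * N ^ 12) ≤
      |omg n k 1 1 1| * |omg n k (-1) (-1) 1| * |omg n k 1 (-1) 1| * |omg n k (-1) 1 1| := by
    rw [← abs_mul, ← abs_mul, ← abs_mul, hP]
    have heq : ((a + b) ^ 2 - c ^ 2) * ((a - b) ^ 2 - c ^ 2)
        = (Mi : ℝ) / (((KK : ℝ) * LL * MM) ^ 2) := by
      rw [← key]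
      field_simp
    rw [heq, abs_div, abs_of_pos (by positivity : (0:ℝ) < ((KK : ℝ) * LL * MM) ^ 2)]
    rw [div_le_div_iff₀ (by positivity) (by positivity)]
    calc 1 * (((KK : ℝ) * LL * MM) ^ 2) ≤ 1 * (16 * N ^ 12) := by
          rw [one_mul, one_mul]; exact hDen
      _ ≤ |(Mi : ℝ)| * (16 * N ^ 12) := by
          apply mul_le_mul_of_nonneg_right (by linarith) (by positivity)
  -- each of the four factors bounded by 3
  have hB1 : |omg n k 1 1 1| ≤ 3 := homgle 1 1 1 (by norm_num) (by norm_num) (by norm_num)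
  have hB2 : |omg n k (-1) (-1) 1| ≤ 3 := homgle _ _ _ (by norm_num) (by norm_num) (by norm_num)
  have hB3 : |omg n k 1 (-1) 1| ≤ 3 := homgle _ _ _ (by norm_num) (by norm_num) (by norm_num)
  have hB4 : |omg n k (-1) 1 1| ≤ 3 := homgle _ _ _ (by norm_num) (by norm_num) (by norm_num)
  have hfour : ∀ e₁ e₂ : ℝ, (e₁ = 1 ∨ e₁ = -1) → (e₂ = 1 ∨ e₂ = -1) →
      ((3 : ℝ) ^ 3)⁻¹ * ((2 : ℝ) ^ 4)⁻¹ * (N ^ 12)⁻¹ ≤ |omg n k e₁ e₂ 1| := by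
    intro e₁ e₂ he₁ he₂
    have key27 : ∀ w x y z : ℝ, 0 ≤ w → 0 ≤ x → 0 ≤ y → 0 ≤ z →
        x ≤ 3 → y ≤ 3 → z ≤ 3 → 1 / (16 * N ^ 12) ≤ w * x * y * z →
        ((3 : ℝ) ^ 3)⁻¹ * ((2 : ℝ) ^ 4)⁻¹ * (N ^ 12)⁻¹ ≤ w :=
      fun w x y z hw hx hy hz hx3 hy3 hz3 hp =>
        quad_factor_bound hN hw hx hy hz hx3 hy3 hz3 hp
    rcases he₁ with rfl | rfl <;> rcases he₂ with rfl | rfl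
    · refine key27 _ _ _ _ (abs_nonneg _) (abs_nonneg _) (abs_nonneg _) (abs_nonneg _)
        hB2 hB3 hB4 ?_
      calc 1 / (16 * N ^ 12) ≤ _ := hprodlb
        _ = _ := by ring
    · refine key27 _ _ _ _ (abs_nonneg _) (abs_nonneg _) (abs_nonneg _) (abs_nonneg _)
        hB1 hB2 hB4 ?_
      calc 1 / (16 * N ^ 12) ≤ _ := hprodlb
        _ = _ := by ring
    · refine key27 _ _ _ _ (abs_nonneg _) (abs_nonneg _) (abs_nonneg _) (abs_nonneg _)
        hB1 hB2 hB3 ?_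
      calc 1 / (16 * N ^ 12) ≤ _ := hprodlb
        _ = _ := by ring
    · refine key27 _ _ _ _ (abs_nonneg _) (abs_nonneg _) (abs_nonneg _) (abs_nonneg _)
        hB1 hB3 hB4 ?_
      calc 1 / (16 * N ^ 12) ≤ _ := hprodlb
        _ = _ := by ring
  -- reduce general σ₃ to σ₃ = 1
  intro σ₁ σ₂ σ₃ h1 h2 h3
  rcases h3 with rfl | rfl
  · exact hfour σ₁ σ₂ h1 h2
  · have hneg : omg n k σ₁ σ₂ (-1) = -(omg n k (-σ₁) (-σ₂) 1) := by
      rw [homg, homg]; ring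
    rw [hneg, abs_neg]
    have h1' : -σ₁ = 1 ∨ -σ₁ = -1 := by rcases h1 with rfl | rfl <;> simp
    have h2' : -σ₂ = 1 ∨ -σ₂ = -1 := by rcases h2 with rfl | rfl <;> simp
    exact hfour _ _ h1' h2'
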